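/- For every integer n ≥ 3, 2n·cos(π/n) − 2(n−2) − 1 > 0 whenever n > 3, and equals 0 when n = 3. -/

import Mathlib

open Real

theorem stmt_15 (n : ℤ) (hn : 3 ≤ n) :
    (3 < n → 2 * (n : ℝ) * Real.cos (π / n) - 2 * ((n : ℝ) - 2) - 1 > 0)
    ∧ (n = 3 → 2 * (n : ℝ) * Real.cos (π / n) - 2 * ((n : ℝ) - 2) - 1 = 0) := by
  constructor
  · intro h4
    have hn4 : (4 : ℝ) ≤ (n : ℝ) := by exact_mod_cast h4
    have hnpos : (0 : ℝ) < (n : ℝ) := by linarith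
    have hne : π / (n : ℝ) ≠ 0 := by
      positivity
    have hcos : 1 - (π / n) ^ 2 / 2 < Real.cos (π / n) :=
      Real.one_sub_sq_div_two_lt_cos hne
    have hpi : π < 3.15 := pi_lt_d2
    have hpi0 : 0 < π := pi_pos
    have hkey : π ^ 2 < 3 * (n : ℝ) := by nlinarith
    have hexp : (π / n) ^ 2 = π ^ 2 / (n : ℝ) ^ 2 := by ring
    rw [hexp] at hcos
    have : 2 * (n : ℝ) * (1 - π ^ 2 / (n : ℝ) ^ 2 / 2) - 2 * ((n : ℝ) - 2) - 1 > 0 := by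
      have h1 : 2 * (n : ℝ) * (1 - π ^ 2 / (n : ℝ) ^ 2 / 2) = 2 * n - π ^ 2 / n := by
        field_simp
      rw [h1]
      have h2 : π ^ 2 / (n : ℝ) < 3 := by
        rw [div_lt_iff₀ hnpos]; linarith
      linarith
    nlinarith
  · intro h3
    subst h3
    norm_num [Real.cos_pi_div_three]
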